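/- Let H be a symmetric positive semidefinite matrix with largest eigenvalue λ₁ (with unit eigenvector v) and second-largest eigenvalue λ₂. Suppose x⋆ ≠ 0 satisfies the μ-incoherence condition |⟨v, x⋆⟩|² ≤ μ‖x⋆‖² with 0 ≤ μ < 1, and let σ = τλ₁ with τ ∈ (0,1). Then (λ₁ − σ)‖x⋆‖² / ‖x⋆‖²_H ≥ (1 − τ)(μ + λ₂/λ₁)⁻¹, where ‖x⋆‖²_H = ⟨x⋆, H x⋆⟩ (assuming ‖x⋆‖²_H > 0 and λ₁ > 0). -/

import Mathlib

open Matrix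

/-- μ-incoherence proposition: if `H` is symmetric psd with top eigenpair `(λ₁, v)`
(`v` a unit vector, `λ₁ > 0`), second-largest eigenvalue `λ₂` (so the quadratic form on
the orthogonal complement of `v` is bounded by `λ₂`), `x⋆ ≠ 0` is `μ`-incoherent with
`0 ≤ μ < 1`, and `σ = τλ₁` with `τ ∈ (0,1)`, then
`(λ₁ - σ)‖x⋆‖² / ‖x⋆‖²_H ≥ (1-τ)(μ + λ₂/λ₁)⁻¹` (assuming `‖x⋆‖²_H > 0`). -/
theorem mu_incoherence_bound {n : ℕ}
    (H : Matrix (Fin n) (Fin n) ℝ) (hH : H.PosSemidef)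
    (lam₁ lam₂ : ℝ) (v : Fin n → ℝ)
    (hv : H.mulVec v = lam₁ • v) (hvunit : v ⬝ᵥ v = 1)
    (hlam₁ : 0 < lam₁) (hlam₂ : 0 ≤ lam₂)
    (hsecond : ∀ w : Fin n → ℝ, w ⬝ᵥ v = 0 → w ⬝ᵥ H.mulVec w ≤ lam₂ * (w ⬝ᵥ w))
    (xstar : Fin n → ℝ) (μ τ σ : ℝ)
    (hx : xstar ≠ 0)
    (hμ0 : 0 ≤ μ) (hμ1 : μ < 1)
    (hincoh : (v ⬝ᵥ xstar) ^ 2 ≤ μ * (xstar ⬝ᵥ xstar))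
    (hτ : τ ∈ Set.Ioo (0 : ℝ) 1) (hσ : σ = τ * lam₁)
    (hHx : 0 < xstar ⬝ᵥ H.mulVec xstar) :
    (lam₁ - σ) * (xstar ⬝ᵥ xstar) / (xstar ⬝ᵥ H.mulVec xstar)
      ≥ (1 - τ) * (μ + lam₂ / lam₁)⁻¹ := by
  obtain ⟨hτ0, hτ1⟩ := hτ
  set c : ℝ := v ⬝ᵥ xstar with hc
  set w : Fin n → ℝ := xstar - c • v with hw
  have hHT : Hᵀ = H := hH.1
  have hsym : H.vecMul v = lam₁ • v := by
    rw [← hHT, Matrix.vecMul_transpose, hv]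
  have hwv : w ⬝ᵥ v = 0 := by
    simp [hw, sub_dotProduct, smul_dotProduct, hvunit,
      dotProduct_comm xstar v, ← hc]
  have hvw : v ⬝ᵥ w = 0 := by rw [dotProduct_comm]; exact hwv
  have hxdecomp : xstar = w + c • v := by simp [hw]
  have hww : w ⬝ᵥ w = xstar ⬝ᵥ xstar - c ^ 2 := by
    simp only [hw, sub_dotProduct, dotProduct_sub, smul_dotProduct,
      dotProduct_smul, hvunit, smul_eq_mul, dotProduct_comm xstar v, ← hc]
    ring
  -- quadratic form decomposition
  have hvHw : v ⬝ᵥ H.mulVec w = 0 := by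
    rw [Matrix.dotProduct_mulVec, hsym, smul_dotProduct, hvw, smul_eq_mul, mul_zero]
  have hwHv : w ⬝ᵥ H.mulVec v = 0 := by
    rw [hv, dotProduct_smul, hwv, smul_eq_mul, mul_zero]
  have hQ : xstar ⬝ᵥ H.mulVec xstar = c ^ 2 * lam₁ + w ⬝ᵥ H.mulVec w := by
    conv_lhs => rw [hxdecomp]
    rw [Matrix.mulVec_add, Matrix.mulVec_smul, add_dotProduct,
      dotProduct_add, dotProduct_add, smul_dotProduct,
      dotProduct_smul, dotProduct_smul, hwHv, hvHw, hv,
      dotProduct_smul, smul_dotProduct, hvunit]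
    simp [smul_eq_mul]
    ring
  set S : ℝ := xstar ⬝ᵥ xstar with hS
  have hS0 : 0 < S := by
    have hnn : 0 ≤ xstar ⬝ᵥ xstar :=
      Finset.sum_nonneg fun i _ => mul_self_nonneg _
    rcases lt_or_eq_of_le hnn with h | h
    · exact h
    · exfalso
      apply hx
      funext i
      have := (Finset.sum_eq_zero_iff_of_nonneg
        (fun i _ => mul_self_nonneg (xstar i))).mp h.symm i (Finset.mem_univ i)
      have := mul_self_eq_zero.mp this
      simpa using this
  have hQle : xstar ⬝ᵥ H.mulVec xstar ≤ (lam₁ * μ + lam₂) * S := by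
    have h1 : w ⬝ᵥ H.mulVec w ≤ lam₂ * (S - c ^ 2) := by
      rw [← hww]; exact hsecond w hwv
    have h2 : c ^ 2 * lam₁ ≤ lam₁ * μ * S := by
      have := mul_le_mul_of_nonneg_left hincoh hlam₁.le
      nlinarith
    have h3 : lam₂ * (S - c ^ 2) ≤ lam₂ * S := by
      nlinarith [sq_nonneg c]
    rw [hQ]; nlinarith
  have hden : 0 < lam₁ * μ + lam₂ := by
    by_contra h
    push_neg at h
    have : (lam₁ * μ + lam₂) * S ≤ 0 := mul_nonpos_of_nonpos_of_nonneg h hS0.le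
    linarith
  have hkey : μ + lam₂ / lam₁ = (lam₁ * μ + lam₂) / lam₁ := by
    field_simp
  rw [hkey, hσ, ge_iff_le]
  have hτ1' : 0 < 1 - τ := by linarith
  rw [inv_div, le_div_iff₀ hHx]
  calc (1 - τ) * (lam₁ / (lam₁ * μ + lam₂)) * (xstar ⬝ᵥ H.mulVec xstar)
      ≤ (1 - τ) * (lam₁ / (lam₁ * μ + lam₂)) * ((lam₁ * μ + lam₂) * S) := by
        apply mul_le_mul_of_nonneg_left hQle
        positivity
    _ = (lam₁ - τ * lam₁) * S := by field_simp
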